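/- (Bickel–Collins formula, eq. (2) of the paper.) Let G be a probability measure on ℝ with finite second moment, and define f(z) = ∫ φ(z − ν) dG(ν) and the estimator δ*(z) = z + f′(z)/f(z). Then the Bayes risk of δ* under squared error loss satisfies ∫∫ (δ*(z) − ν)² φ(z − ν) dz dG(ν) = 1 − ∫ (f′(z))²/f(z) dz. -/

import Mathlib

open MeasureTheory Real Filter

/-- The standard normal density `φ(x) = (2π)^{-1/2} e^{-x²/2}`. -/
noncomputable def stdNormalPDF (x : ℝ) : ℝ :=
  (Real.sqrt (2 * Real.pi))⁻¹ * Real.exp (-x ^ 2 / 2)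

lemma sqrt_two_pi_pos : 0 < Real.sqrt (2 * Real.pi) :=
  Real.sqrt_pos.2 (by positivity)

lemma inv_sqrt_two_pi_le_one : (Real.sqrt (2 * Real.pi))⁻¹ ≤ 1 := by
  rw [inv_le_one_iff₀]
  right
  have : (1:ℝ) ≤ 2 * Real.pi := by nlinarith [Real.pi_gt_three]
  nlinarith [Real.sq_sqrt (by positivity : (0:ℝ) ≤ 2 * Real.pi),
    Real.sqrt_nonneg (2 * Real.pi)]

lemma phi_pos (x : ℝ) : 0 < stdNormalPDF x := by
  unfold stdNormalPDF
  positivity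

lemma phi_nonneg (x : ℝ) : 0 ≤ stdNormalPDF x := (phi_pos x).le

lemma phi_le_one (x : ℝ) : stdNormalPDF x ≤ 1 := by
  unfold stdNormalPDF
  have h1 : Real.exp (-x ^ 2 / 2) ≤ 1 := by
    rw [Real.exp_le_one_iff]; nlinarith [sq_nonneg x]
  nlinarith [inv_sqrt_two_pi_le_one, sqrt_two_pi_pos, Real.exp_pos (-x^2/2)]

lemma continuous_phi : Continuous stdNormalPDF := by
  unfold stdNormalPDF
  continuity

lemma measurable_phi : Measurable stdNormalPDF := continuous_phi.measurable

lemma abs_mul_phi_le (x : ℝ) : |x * stdNormalPDF x| ≤ 1 := by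
  have h1 : |x| ≤ Real.exp (x ^ 2 / 2) := by
    have := Real.add_one_le_exp (x ^ 2 / 2)
    nlinarith [sq_nonneg (|x| - 1), sq_abs x]
  have h2 : |x * stdNormalPDF x| = |x| * stdNormalPDF x := by
    rw [abs_mul, abs_of_nonneg (phi_nonneg x)]
  rw [h2]
  unfold stdNormalPDF
  have h3 : Real.exp (x ^ 2 / 2) * Real.exp (-x ^ 2 / 2) = 1 := by
    rw [← Real.exp_add]; ring_nf; exact Real.exp_zero
  nlinarith [inv_sqrt_two_pi_le_one, abs_nonneg x, Real.exp_pos (-x^2/2),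
    inv_nonneg.2 (sqrt_two_pi_pos.le), mul_le_mul_of_nonneg_right h1 (Real.exp_pos (-x^2/2)).le]

lemma sq_mul_phi_le (x : ℝ) : x ^ 2 * stdNormalPDF x ≤ 2 := by
  have h1 : x ^ 2 / 2 ≤ Real.exp (x ^ 2 / 2) := by
    nlinarith [Real.add_one_le_exp (x ^ 2 / 2)]
  have h3 : Real.exp (x ^ 2 / 2) * Real.exp (-x ^ 2 / 2) = 1 := by
    rw [← Real.exp_add]; ring_nf; exact Real.exp_zero
  unfold stdNormalPDF
  have h4 : x ^ 2 * Real.exp (-x ^ 2 / 2) ≤ 2 := by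
    nlinarith [Real.exp_pos (-x^2/2), Real.exp_pos (x^2/2)]
  nlinarith [inv_sqrt_two_pi_le_one, sq_nonneg x, Real.exp_pos (-x^2/2),
    inv_nonneg.2 (sqrt_two_pi_pos.le)]

lemma hasDerivAt_phi (x : ℝ) : HasDerivAt stdNormalPDF (-x * stdNormalPDF x) x := by
  have h1 : HasDerivAt (fun y : ℝ => -y ^ 2 / 2) (-x) x := by
    have := ((hasDerivAt_pow 2 x).neg.div_const 2)
    simpa using this.congr_deriv (by ring)
  have h2 : HasDerivAt (fun y : ℝ => Real.exp (-y ^ 2 / 2)) (Real.exp (-x ^ 2 / 2) * (-x)) x :=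
    h1.exp
  have h3 := h2.const_mul (Real.sqrt (2 * Real.pi))⁻¹
  unfold stdNormalPDF
  exact h3.congr_deriv (by ring)

lemma integrable_phi : Integrable stdNormalPDF := by
  have h : Integrable (fun x : ℝ => Real.exp (-(1/2 : ℝ) * x ^ 2)) :=
    integrable_exp_neg_mul_sq (by norm_num)
  have := h.const_mul (Real.sqrt (2 * Real.pi))⁻¹
  refine this.congr (Filter.Eventually.of_forall fun x => ?_)
  unfold stdNormalPDF; ring_nf

lemma integrable_aux_exp : Integrable (fun x : ℝ => Real.exp (-(1/4 : ℝ) * x ^ 2)) :=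
  integrable_exp_neg_mul_sq (by norm_num)

lemma integrable_mul_phi : Integrable (fun x : ℝ => x * stdNormalPDF x) := by
  refine (integrable_aux_exp.const_mul 2).mono'
    ((continuous_id.mul continuous_phi).aestronglyMeasurable)
    (Filter.Eventually.of_forall fun x => ?_)
  have h1 : |x| ≤ 2 * Real.exp (x ^ 2 / 4) := by
    nlinarith [Real.add_one_le_exp (x ^ 2 / 4), sq_nonneg (|x| - 2), sq_abs x]
  have h2 : |x * stdNormalPDF x| = |x| * stdNormalPDF x := by
    rw [abs_mul, abs_of_nonneg (phi_nonneg x)]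
  rw [Real.norm_eq_abs, h2]
  have h3 : stdNormalPDF x ≤ Real.exp (-x ^ 2 / 2) := by
    unfold stdNormalPDF
    nlinarith [inv_sqrt_two_pi_le_one, Real.exp_pos (-x^2/2),
      inv_nonneg.2 sqrt_two_pi_pos.le]
  have h4 : Real.exp (x ^ 2 / 4) * Real.exp (-x ^ 2 / 2) = Real.exp (-(1/4) * x ^ 2) := by
    rw [← Real.exp_add]; ring_nf
  calc |x| * stdNormalPDF x ≤ (2 * Real.exp (x ^ 2 / 4)) * Real.exp (-x ^ 2 / 2) := by
        apply mul_le_mul h1 h3 (phi_nonneg x) (by positivity)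
    _ = 2 * Real.exp (-(1/4) * x ^ 2) := by rw [mul_assoc, h4]

lemma integrable_sq_mul_phi : Integrable (fun x : ℝ => x ^ 2 * stdNormalPDF x) := by
  refine (integrable_aux_exp.const_mul 4).mono'
    (((continuous_pow 2).mul continuous_phi).aestronglyMeasurable)
    (Filter.Eventually.of_forall fun x => ?_)
  have h1 : x ^ 2 ≤ 4 * Real.exp (x ^ 2 / 4) := by
    nlinarith [Real.add_one_le_exp (x ^ 2 / 4)]
  have h2 : |x ^ 2 * stdNormalPDF x| = x ^ 2 * stdNormalPDF x := by
    rw [abs_of_nonneg (mul_nonneg (sq_nonneg x) (phi_nonneg x))]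
  rw [Real.norm_eq_abs, h2]
  have h3 : stdNormalPDF x ≤ Real.exp (-x ^ 2 / 2) := by
    unfold stdNormalPDF
    nlinarith [inv_sqrt_two_pi_le_one, Real.exp_pos (-x^2/2),
      inv_nonneg.2 sqrt_two_pi_pos.le]
  have h4 : Real.exp (x ^ 2 / 4) * Real.exp (-x ^ 2 / 2) = Real.exp (-(1/4) * x ^ 2) := by
    rw [← Real.exp_add]; ring_nf
  calc x ^ 2 * stdNormalPDF x ≤ (4 * Real.exp (x ^ 2 / 4)) * Real.exp (-x ^ 2 / 2) := by
        apply mul_le_mul h1 h3 (phi_nonneg x) (by positivity)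
    _ = 4 * Real.exp (-(1/4) * x ^ 2) := by rw [mul_assoc, h4]

lemma integral_phi : ∫ x : ℝ, stdNormalPDF x = 1 := by
  have h : ∫ x : ℝ, Real.exp (-(1/2 : ℝ) * x ^ 2) = Real.sqrt (Real.pi / (1/2)) :=
    integral_gaussian (1/2)
  have h2 : ∫ x : ℝ, stdNormalPDF x
      = (Real.sqrt (2 * Real.pi))⁻¹ * ∫ x : ℝ, Real.exp (-(1/2 : ℝ) * x ^ 2) := by
    rw [← integral_const_mul]
    congr 1; funext x; unfold stdNormalPDF; ring_nf
  rw [h2, h, show Real.pi / (1/2) = 2 * Real.pi by ring]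
  exact inv_mul_cancel₀ sqrt_two_pi_pos.ne'

lemma hasDerivAt_neg_phi (x : ℝ) :
    HasDerivAt (fun y : ℝ => -stdNormalPDF y) (x * stdNormalPDF x) x := by
  exact (hasDerivAt_phi x).neg.congr_deriv (by ring)

lemma integral_mul_phi : ∫ x : ℝ, x * stdNormalPDF x = 0 := by
  have h := integral_mul_deriv_eq_deriv_mul_of_integrable
    (u := fun _ : ℝ => (1 : ℝ)) (u' := fun _ : ℝ => (0 : ℝ))
    (v := fun y : ℝ => -stdNormalPDF y) (v' := fun y : ℝ => y * stdNormalPDF y)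
    (fun x _ => hasDerivAt_const x 1) (fun x _ => hasDerivAt_neg_phi x)
    (by simp only [Pi.mul_def, one_mul]; exact integrable_mul_phi)
    (by simp only [Pi.mul_def, zero_mul]; exact integrable_zero _ _ _)
    (by simp only [Pi.mul_def, one_mul]; exact integrable_phi.neg)
  simpa using h

lemma integral_sq_mul_phi : ∫ x : ℝ, x ^ 2 * stdNormalPDF x = 1 := by
  have h := integral_mul_deriv_eq_deriv_mul_of_integrable
    (u := fun y : ℝ => y) (u' := fun _ : ℝ => (1 : ℝ))
    (v := fun y : ℝ => -stdNormalPDF y) (v' := fun y : ℝ => y * stdNormalPDF y)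
    (fun x _ => hasDerivAt_id x) (fun x _ => hasDerivAt_neg_phi x)
    (by
      refine integrable_sq_mul_phi.congr (Filter.Eventually.of_forall fun x => ?_)
      simp [Pi.mul_def]; ring)
    (by
      have := integrable_phi.neg
      refine this.congr (Filter.Eventually.of_forall fun x => ?_)
      simp [Pi.mul_def])
    (by
      have := integrable_mul_phi.neg
      refine this.congr (Filter.Eventually.of_forall fun x => ?_)
      simp [Pi.mul_def])
  have h2 : ∫ x : ℝ, x * (x * stdNormalPDF x) = ∫ x : ℝ, x ^ 2 * stdNormalPDF x := by
    congr 1; funext x; ring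
  rw [h2] at h
  rw [h]
  simp only [one_mul, integral_neg, neg_neg, integral_phi]

lemma integral_phi_sub (ν : ℝ) : ∫ z : ℝ, stdNormalPDF (z - ν) = 1 := by
  rw [integral_sub_right_eq_self stdNormalPDF ν]
  exact integral_phi

lemma integrable_phi_sub (ν : ℝ) : Integrable (fun z : ℝ => stdNormalPDF (z - ν)) :=
  integrable_phi.comp_sub_right ν

lemma integrable_sq_phi_sub (ν : ℝ) :
    Integrable (fun z : ℝ => (ν - z) ^ 2 * stdNormalPDF (z - ν)) := by
  have h := integrable_sq_mul_phi.comp_sub_right (g := ν)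
  refine h.congr (Filter.Eventually.of_forall fun z => ?_)
  simp only []
  ring_nf

lemma integral_sq_phi_sub (ν : ℝ) :
    ∫ z : ℝ, (ν - z) ^ 2 * stdNormalPDF (z - ν) = 1 := by
  have e : (fun z : ℝ => (ν - z) ^ 2 * stdNormalPDF (z - ν))
      = fun z : ℝ => (fun x : ℝ => x ^ 2 * stdNormalPDF x) (z - ν) := by
    funext z; simp only []; ring_nf
  rw [e, integral_sub_right_eq_self (fun x : ℝ => x ^ 2 * stdNormalPDF x) ν]
  exact integral_sq_mul_phi

/-- **Bickel–Collins formula.** Let `G` be a probability measure on `ℝ` with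
finite second moment, `f(z) = ∫ φ(z − ν) dG(ν)` and `δ*(z) = z + f′(z)/f(z)`. Then the
Bayes risk of `δ*` under squared error loss satisfies
`∫∫ (δ*(z) − ν)² φ(z − ν) dz dG(ν) = 1 − ∫ (f′(z))²/f(z) dz`. -/
theorem stmt4 (G : Measure ℝ) [IsProbabilityMeasure G]
    (hG : Integrable (fun ν : ℝ => ν ^ 2) G)
    (f : ℝ → ℝ) (hf : f = fun z : ℝ => ∫ ν, stdNormalPDF (z - ν) ∂G)
    (δs : ℝ → ℝ) (hδs : δs = fun z : ℝ => z + deriv f z / f z) :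
    ∫ ν, (∫ z, (δs z - ν) ^ 2 * stdNormalPDF (z - ν)) ∂G
      = 1 - ∫ z, (deriv f z) ^ 2 / f z := by
  -- G-side integrability of the basic integrands
  have hfint : ∀ z : ℝ, Integrable (fun ν => stdNormalPDF (z - ν)) G := by
    intro z
    refine (integrable_const (1 : ℝ)).mono'
      ((continuous_phi.comp (continuous_const.sub continuous_id)).aestronglyMeasurable)
      (Filter.Eventually.of_forall fun ν => ?_)
    rw [Real.norm_eq_abs, abs_of_nonneg (phi_nonneg _)]
    exact phi_le_one _
  have hsubint : ∀ z : ℝ, Integrable (fun ν => (ν - z) * stdNormalPDF (z - ν)) G := by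
    intro z
    refine (integrable_const (1 : ℝ)).mono'
      (((continuous_id.sub continuous_const).mul
        (continuous_phi.comp (continuous_const.sub continuous_id))).aestronglyMeasurable)
      (Filter.Eventually.of_forall fun ν => ?_)
    rw [Real.norm_eq_abs]
    have : |(ν - z) * stdNormalPDF (z - ν)| = |(z - ν) * stdNormalPDF (z - ν)| := by
      rw [abs_mul, abs_mul, abs_sub_comm]
    rw [this]
    exact abs_mul_phi_le _
  have hsqint : ∀ z : ℝ, Integrable (fun ν => (ν - z) ^ 2 * stdNormalPDF (z - ν)) G := by
    intro z
    refine (integrable_const (2 : ℝ)).mono'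
      ((((continuous_id.sub continuous_const).pow 2).mul
        (continuous_phi.comp (continuous_const.sub continuous_id))).aestronglyMeasurable)
      (Filter.Eventually.of_forall fun ν => ?_)
    rw [Real.norm_eq_abs, abs_of_nonneg (mul_nonneg (sq_nonneg _) (phi_nonneg _))]
    have e : (ν - z) ^ 2 = (z - ν) ^ 2 := by ring
    rw [e]
    exact sq_mul_phi_le _
  -- differentiation under the integral sign
  have hF : ∀ z : ℝ, HasDerivAt f (∫ ν, (ν - z) * stdNormalPDF (z - ν) ∂G) z := by
    intro z
    have key := hasDerivAt_integral_of_dominated_loc_of_deriv_le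
      (F := fun x (ν : ℝ) => stdNormalPDF (x - ν))
      (F' := fun x (ν : ℝ) => -(x - ν) * stdNormalPDF (x - ν))
      (x₀ := z) (s := Metric.ball z 1) (bound := fun _ => (1 : ℝ)) (μ := G) (Metric.ball_mem_nhds z one_pos)
      (Filter.Eventually.of_forall fun x =>
        (continuous_phi.comp (continuous_const.sub continuous_id)).aestronglyMeasurable)
      (hfint z)
      (((continuous_const.sub continuous_id).neg.mul
        (continuous_phi.comp (continuous_const.sub continuous_id))).aestronglyMeasurable)
      (Filter.Eventually.of_forall fun ν x _ => by
        rw [Real.norm_eq_abs]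
        have : |-(x - ν) * stdNormalPDF (x - ν)| = |(x - ν) * stdNormalPDF (x - ν)| := by
          rw [abs_mul, abs_mul, abs_neg]
        rw [this]; exact abs_mul_phi_le _)
      (integrable_const 1)
      (Filter.Eventually.of_forall fun ν x _ => by
        have h1 := (hasDerivAt_phi (x - ν)).comp x ((hasDerivAt_id x).sub_const ν)
        exact h1.congr_deriv (by ring))
    have h2 := key.2
    have e : (fun x => ∫ ν, stdNormalPDF (x - ν) ∂G) = f := hf.symm
    rw [e] at h2
    refine HasDerivAt.congr_deriv h2 ?_
    apply integral_congr_ae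
    exact Filter.Eventually.of_forall fun ν => by ring
  have hderiv : ∀ z : ℝ, deriv f z = ∫ ν, (ν - z) * stdNormalPDF (z - ν) ∂G :=
    fun z => (hF z).deriv
  have hf_pos : ∀ z : ℝ, 0 < f z := by
    intro z
    rw [hf]
    rw [integral_pos_iff_support_of_nonneg_ae
      (Filter.Eventually.of_forall fun ν => phi_nonneg _) (hfint z)]
    have : Function.support (fun ν : ℝ => stdNormalPDF (z - ν)) = Set.univ :=
      Set.eq_univ_of_forall fun ν => (phi_pos _).ne'
    rw [this]
    simp
  have hf_meas : Measurable f :=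
    (fun z => ((hF z).differentiableAt : DifferentiableAt ℝ f z)) |>
      fun hd => (Differentiable.continuous hd).measurable
  have hd_meas : Measurable (deriv f) := measurable_deriv f
  set h : ℝ → ℝ := fun z => ∫ ν, (ν - z) ^ 2 * stdNormalPDF (z - ν) ∂G with hh
  -- the key pointwise expansion of the inner integral
  have key : ∀ z : ℝ, (∫ ν, (δs z - ν) ^ 2 * stdNormalPDF (z - ν) ∂G)
      = h z - (deriv f z) ^ 2 / f z := by
    intro z
    set t : ℝ := deriv f z / f z with ht
    have e : ∀ ν : ℝ, (δs z - ν) ^ 2 * stdNormalPDF (z - ν)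
        = ((ν - z) ^ 2 * stdNormalPDF (z - ν)
            - (2 * t) * ((ν - z) * stdNormalPDF (z - ν)))
          + t ^ 2 * stdNormalPDF (z - ν) := by
      intro ν; rw [hδs]; ring
    rw [integral_congr_ae (Filter.Eventually.of_forall e)]
    have hsub : Integrable (fun ν : ℝ => (ν - z) ^ 2 * stdNormalPDF (z - ν)
        - 2 * t * ((ν - z) * stdNormalPDF (z - ν))) G :=
      (hsqint z).sub ((hsubint z).const_mul (2 * t))
    rw [integral_add hsub ((hfint z).const_mul (t ^ 2))]
    rw [integral_sub (hsqint z) ((hsubint z).const_mul (2 * t))]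
    rw [integral_const_mul, integral_const_mul, ← hderiv z]
    have hfz : f z = ∫ ν, stdNormalPDF (z - ν) ∂G := by rw [hf]
    rw [← hfz]
    rw [show (∫ a : ℝ, (a - z) ^ 2 * stdNormalPDF (z - a) ∂G) = h z from rfl]
    have hfne : f z ≠ 0 := (hf_pos z).ne'
    rw [ht]
    field_simp
    ring
  have key_nonneg : ∀ z : ℝ, (deriv f z) ^ 2 / f z ≤ h z := by
    intro z
    have h0 : 0 ≤ ∫ ν, (δs z - ν) ^ 2 * stdNormalPDF (z - ν) ∂G :=
      integral_nonneg fun ν => mul_nonneg (sq_nonneg _) (phi_nonneg _)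
    rw [key z] at h0
    linarith
  -- product integrability of the quadratic term
  have P1meas : AEStronglyMeasurable
      (fun p : ℝ × ℝ => (p.1 - p.2) ^ 2 * stdNormalPDF (p.2 - p.1)) (G.prod volume) :=
    (((continuous_fst.sub continuous_snd).pow 2).mul
      (continuous_phi.comp (continuous_snd.sub continuous_fst))).aestronglyMeasurable
  have P1 : Integrable (fun p : ℝ × ℝ => (p.1 - p.2) ^ 2 * stdNormalPDF (p.2 - p.1))
      (G.prod volume) := by
    rw [integrable_prod_iff P1meas]
    constructor
    · exact Filter.Eventually.of_forall fun ν => integrable_sq_phi_sub ν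
    · have e : (fun ν : ℝ => ∫ z : ℝ, ‖(ν - z) ^ 2 * stdNormalPDF (z - ν)‖)
          = fun _ : ℝ => (1 : ℝ) := by
        funext ν
        have e2 : ∀ z : ℝ, ‖(ν - z) ^ 2 * stdNormalPDF (z - ν)‖
            = (ν - z) ^ 2 * stdNormalPDF (z - ν) := fun z => by
          rw [Real.norm_eq_abs, abs_of_nonneg (mul_nonneg (sq_nonneg _) (phi_nonneg _))]
        rw [integral_congr_ae (Filter.Eventually.of_forall e2), integral_sq_phi_sub]
      rw [e]
      exact integrable_const 1
  have hIntH : Integrable h volume := by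
    have := P1.integral_prod_right
    rw [hh]
    exact this
  have hIntH1 : ∫ z : ℝ, h z = 1 := by
    have hswap := integral_integral_swap
      (f := fun (ν z : ℝ) => (ν - z) ^ 2 * stdNormalPDF (z - ν)) (μ := G) (ν := volume) P1
    have e1 : ∫ ν, (∫ z : ℝ, (ν - z) ^ 2 * stdNormalPDF (z - ν)) ∂G = 1 := by
      rw [integral_congr_ae (Filter.Eventually.of_forall fun ν => integral_sq_phi_sub ν)]
      simp
    rw [e1] at hswap
    exact hswap.symm
  have hratio : Integrable (fun z : ℝ => (deriv f z) ^ 2 / f z) volume := by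
    refine hIntH.mono' (((hd_meas.pow_const 2).div hf_meas).aestronglyMeasurable)
      (Filter.Eventually.of_forall fun z => ?_)
    rw [Real.norm_eq_abs, abs_of_nonneg (div_nonneg (sq_nonneg _) (hf_pos z).le)]
    exact key_nonneg z
  -- product integrability of the ratio term
  have P2meas : AEStronglyMeasurable
      (fun p : ℝ × ℝ => (deriv f p.2 / f p.2) ^ 2 * stdNormalPDF (p.2 - p.1))
      (G.prod volume) := by
    apply Measurable.aestronglyMeasurable
    exact ((((hd_meas.comp measurable_snd).div (hf_meas.comp measurable_snd)).pow_const 2).mul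
      (measurable_phi.comp (measurable_snd.sub measurable_fst)))
  have P2 : Integrable
      (fun p : ℝ × ℝ => (deriv f p.2 / f p.2) ^ 2 * stdNormalPDF (p.2 - p.1))
      (G.prod volume) := by
    rw [integrable_prod_iff' P2meas]
    constructor
    · exact Filter.Eventually.of_forall fun z => (hfint z).const_mul ((deriv f z / f z) ^ 2)
    · have e : (fun z : ℝ => ∫ ν, ‖(deriv f z / f z) ^ 2 * stdNormalPDF (z - ν)‖ ∂G)
          = fun z : ℝ => (deriv f z) ^ 2 / f z := by
        funext z
        have e2 : ∀ ν : ℝ, ‖(deriv f z / f z) ^ 2 * stdNormalPDF (z - ν)‖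
            = (deriv f z / f z) ^ 2 * stdNormalPDF (z - ν) := fun ν => by
          rw [Real.norm_eq_abs, abs_of_nonneg (mul_nonneg (sq_nonneg _) (phi_nonneg _))]
        rw [integral_congr_ae (Filter.Eventually.of_forall e2), integral_const_mul]
        have hfz : ∫ ν, stdNormalPDF (z - ν) ∂G = f z := by rw [hf]
        rw [hfz]
        rw [div_pow, div_mul_eq_mul_div, sq (f z), ← div_div,
          mul_div_assoc, div_self (hf_pos z).ne', mul_one]
      rw [e]
      exact hratio
  -- integrability of the full integrand on the product space
  have F0meas : AEStronglyMeasurable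
      (fun p : ℝ × ℝ => (δs p.2 - p.1) ^ 2 * stdNormalPDF (p.2 - p.1)) (G.prod volume) := by
    apply Measurable.aestronglyMeasurable
    have hδs_meas : Measurable δs := by
      rw [hδs]
      exact measurable_id.add ((hd_meas).div hf_meas)
    exact (((hδs_meas.comp measurable_snd).sub measurable_fst).pow_const 2).mul
      (measurable_phi.comp (measurable_snd.sub measurable_fst))
  have F0 : Integrable
      (fun p : ℝ × ℝ => (δs p.2 - p.1) ^ 2 * stdNormalPDF (p.2 - p.1)) (G.prod volume) := by
    refine ((P1.const_mul 2).add (P2.const_mul 2)).mono' F0meas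
      (Filter.Eventually.of_forall fun p => ?_)
    rw [Real.norm_eq_abs, abs_of_nonneg (mul_nonneg (sq_nonneg _) (phi_nonneg _))]
    have hb : (δs p.2 - p.1) ^ 2 ≤ 2 * (p.1 - p.2) ^ 2 + 2 * (deriv f p.2 / f p.2) ^ 2 := by
      rw [hδs]
      simp only []
      nlinarith [sq_nonneg ((p.2 - p.1) - deriv f p.2 / f p.2)]
    simp only [Pi.add_apply]
    calc (δs p.2 - p.1) ^ 2 * stdNormalPDF (p.2 - p.1)
        ≤ (2 * (p.1 - p.2) ^ 2 + 2 * (deriv f p.2 / f p.2) ^ 2) * stdNormalPDF (p.2 - p.1) :=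
          mul_le_mul_of_nonneg_right hb (phi_nonneg _)
      _ = 2 * ((p.1 - p.2) ^ 2 * stdNormalPDF (p.2 - p.1))
          + 2 * ((deriv f p.2 / f p.2) ^ 2 * stdNormalPDF (p.2 - p.1)) := by ring
  -- Fubini and conclusion
  have hswap := integral_integral_swap
    (f := fun (ν z : ℝ) => (δs z - ν) ^ 2 * stdNormalPDF (z - ν)) (μ := G) (ν := volume) F0
  rw [hswap]
  have e : (fun z : ℝ => ∫ ν, (δs z - ν) ^ 2 * stdNormalPDF (z - ν) ∂G)
      = fun z : ℝ => h z - (deriv f z) ^ 2 / f z := funext key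
  rw [e, integral_sub hIntH hratio, hIntH1]
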